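/- Let A be a unital C*-algebra with a lower semicontinuous Lipschitz seminorm L whose null space is ℂ·1_A and with L(a*) = L(a). For g in the dual of A with g(1_A)=0 and ‖g‖ ≤ 2, writing g = (φ₁-φ₂) + i(φ₃-φ₄) with states φᵢ, one has L'(g) ≤ ρ_L(φ₁,φ₂) + ρ_L(φ₃,φ₄) ≤ 2 L'(g), where L'(f) = sup{|f(a)| : L(a) ≤ 1}. -/
import Mathlib


open scoped ENNReal NNReal ComplexOrder

noncomputable section

section Defs

variable {A : Type*} [NormedRing A] [StarRing A] [CStarRing A]
  [NormedAlgebra ℂ A] [StarModule ℂ A] [CompleteSpace A]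

/-- A state on a unital C*-algebra: a continuous linear functional that is unital and positive. -/
def IsState (φ : A →L[ℂ] ℂ) : Prop :=
  φ 1 = 1 ∧ ∀ a : A, 0 ≤ φ (star a * a)

/-- The metric `ρ_L` on the dual induced by a seminorm `L`. -/
def rho (L : A → ℝ≥0∞) (φ ψ : A →L[ℂ] ℂ) : ℝ≥0∞ :=
  ⨆ a : {a : A // L a ≤ 1}, (‖φ a.1 - ψ a.1‖₊ : ℝ≥0∞)

/-- The weak*-topology on the state space. -/
def weakStarTop (A : Type*) [NormedRing A] [StarRing A] [CStarRing A]
    [NormedAlgebra ℂ A] [StarModule ℂ A] [CompleteSpace A] :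
    TopologicalSpace {φ : A →L[ℂ] ℂ // IsState φ} :=
  TopologicalSpace.induced (fun φ => (fun a => φ.1 a : A → ℂ)) inferInstance

/-- The metric `ρ_L` induces the weak*-topology on the state space. -/
def InducesWeakStar (L : A → ℝ≥0∞) : Prop :=
  ∀ φ : {φ : A →L[ℂ] ℂ // IsState φ},
    @nhds _ (weakStarTop A) φ =
      ⨅ (ε : ℝ≥0∞) (_ : 0 < ε),
        Filter.principal {ψ : {φ : A →L[ℂ] ℂ // IsState φ} | rho L φ.1 ψ.1 < ε}

/-- A Lip-norm on a unital C*-algebra: a (possibly `∞`-valued) seminorm vanishing at `1`,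
star-invariant, whose induced metric gives the state space the weak*-topology. -/
structure IsLipNorm (L : A → ℝ≥0∞) : Prop where
  add_le : ∀ a b : A, L (a + b) ≤ L a + L b
  smul_eq : ∀ (c : ℂ) (a : A), L (c • a) = (‖c‖₊ : ℝ≥0∞) * L a
  one_eq : L 1 = 0
  star_eq : ∀ a : A, L (star a) = L a
  induces : InducesWeakStar L

/-- The Leibniz rule for a seminorm. -/
def IsLeibniz (L : A → ℝ≥0∞) : Prop :=
  ∀ a b : A, L (a * b) ≤ L a * (‖b‖₊ : ℝ≥0∞) + (‖a‖₊ : ℝ≥0∞) * L b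

end Defs

/-- The dual seminorm `L'` on the dual space of `A`. -/
def dualSeminorm {A : Type*} [NormedRing A] [StarRing A] [CStarRing A]
    [NormedAlgebra ℂ A] [StarModule ℂ A] [CompleteSpace A]
    (L : A → ℝ≥0∞) (f : A →L[ℂ] ℂ) : ℝ≥0∞ :=
  ⨆ a : {a : A // L a ≤ 1}, (‖f a.1‖₊ : ℝ≥0∞)

lemma pos_star_eq {A : Type*} [NormedRing A] [StarRing A]
    [NormedAlgebra ℂ A] [StarModule ℂ A]
    (φ : A →L[ℂ] ℂ) (hφ : ∀ a : A, 0 ≤ φ (star a * a)) (a : A) :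
    φ (star a) = starRingEnd ℂ (φ a) := by
  have him : ∀ b : A, (φ (star b * b)).im = 0 := fun b => ((Complex.nonneg_iff).1 (hφ b)).2.symm
  have e1 : star (a + 1) * (a + 1) = star a * a + star a + a + 1 := by
    rw [star_add, star_one]; noncomm_ring
  have e2 : star (a + Complex.I • 1) * (a + Complex.I • 1)
      = star a * a + Complex.I • star a + (-Complex.I) • a + 1 := by
    rw [star_add, star_smul, star_one, Complex.star_def, Complex.conj_I]
    simp only [add_mul, mul_add, mul_smul_comm, smul_mul_assoc, mul_one, one_mul,
      smul_smul, neg_mul, Complex.I_mul_I, neg_neg, one_smul]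
    match_scalars <;> simp [pow_two, Complex.I_mul_I]
  have h1 := him (a + 1)
  have h2 := him (a + Complex.I • 1)
  rw [e1] at h1
  rw [e2] at h2
  simp only [map_add, map_smul, Complex.add_im, him a, Complex.smul_im, Complex.smul_re] at h1 h2
  have hone : (φ 1).im = 0 := by simpa using him 1
  rw [hone] at h1 h2
  simp [Complex.mul_im, Complex.I_re, Complex.I_im, Complex.neg_im, Complex.neg_re] at h1 h2
  apply Complex.ext <;> simp [Complex.conj_re, Complex.conj_im] <;> linarith

/-- For a lower semicontinuous Lipschitz seminorm `L` and `g` in the dual of `A` with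
`g(1)=0`, `‖g‖ ≤ 2`, decomposed as `g = (φ₁-φ₂) + i(φ₃-φ₄)` with states `φᵢ`, one has
`L'(g) ≤ ρ_L(φ₁,φ₂) + ρ_L(φ₃,φ₄) ≤ 2 L'(g)`. -/
theorem stmt_7 {A : Type*} [NormedRing A] [StarRing A] [CStarRing A]
    [NormedAlgebra ℂ A] [StarModule ℂ A] [CompleteSpace A]
    (L : A → ℝ≥0∞)
    (hadd : ∀ a b : A, L (a + b) ≤ L a + L b)
    (hsmul : ∀ (c : ℂ) (a : A), L (c • a) = (‖c‖₊ : ℝ≥0∞) * L a)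
    (hstar : ∀ a : A, L (star a) = L a)
    (hnull : ∀ a : A, L a = 0 ↔ ∃ c : ℂ, a = c • (1 : A))
    (hlsc : IsClosed {a : A | L a ≤ 1})
    (g : A →L[ℂ] ℂ) (hg1 : g 1 = 0) (hgnorm : ‖g‖ ≤ 2)
    (φ₁ φ₂ φ₃ φ₄ : A →L[ℂ] ℂ)
    (h₁ : IsState φ₁) (h₂ : IsState φ₂) (h₃ : IsState φ₃) (h₄ : IsState φ₄)
    (hdec : ∀ a : A, g a = (φ₁ a - φ₂ a) + Complex.I * (φ₃ a - φ₄ a)) :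
    dualSeminorm L g ≤ rho L φ₁ φ₂ + rho L φ₃ φ₄ ∧
      rho L φ₁ φ₂ + rho L φ₃ φ₄ ≤ 2 * dualSeminorm L g := by
  have herm : ∀ (φ : A →L[ℂ] ℂ), IsState φ → ∀ a : A, φ (star a) = starRingEnd ℂ (φ a) :=
    fun φ hφ => pos_star_eq φ hφ.2
  set D := dualSeminorm L g with hD
  constructor
  · refine iSup_le fun a => ?_
    have h1 : (‖φ₁ a.1 - φ₂ a.1‖₊ : ℝ≥0∞) ≤ rho L φ₁ φ₂ :=
      le_iSup (fun b : {a : A // L a ≤ 1} => (‖φ₁ b.1 - φ₂ b.1‖₊ : ℝ≥0∞)) a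
    have h2 : (‖φ₃ a.1 - φ₄ a.1‖₊ : ℝ≥0∞) ≤ rho L φ₃ φ₄ :=
      le_iSup (fun b : {a : A // L a ≤ 1} => (‖φ₃ b.1 - φ₄ b.1‖₊ : ℝ≥0∞)) a
    refine le_trans ?_ (add_le_add h1 h2)
    rw [hdec]
    calc (‖(φ₁ a.1 - φ₂ a.1) + Complex.I * (φ₃ a.1 - φ₄ a.1)‖₊ : ℝ≥0∞)
        ≤ (‖φ₁ a.1 - φ₂ a.1‖₊ : ℝ≥0∞) + ‖Complex.I * (φ₃ a.1 - φ₄ a.1)‖₊ := by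
          exact_mod_cast nnnorm_add_le _ _
      _ = (‖φ₁ a.1 - φ₂ a.1‖₊ : ℝ≥0∞) + ‖φ₃ a.1 - φ₄ a.1‖₊ := by
          rw [nnnorm_mul, Complex.nnnorm_I, one_mul]
  · have key : ∀ a : {a : A // L a ≤ 1},
        g a.1 + starRingEnd ℂ (g (star a.1)) = 2 * (φ₁ a.1 - φ₂ a.1) ∧
        g a.1 - starRingEnd ℂ (g (star a.1)) = 2 * Complex.I * (φ₃ a.1 - φ₄ a.1) := by
      intro a
      have hgs : starRingEnd ℂ (g (star a.1))
          = (φ₁ a.1 - φ₂ a.1) - Complex.I * (φ₃ a.1 - φ₄ a.1) := by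
        rw [hdec (star a.1), herm φ₁ h₁, herm φ₂ h₂, herm φ₃ h₃, herm φ₄ h₄]
        simp only [map_add, map_sub, map_mul, Complex.conj_conj, Complex.conj_I]
        ring
      constructor
      · rw [hdec a.1, hgs]; ring
      · rw [hdec a.1, hgs]; ring
    have hgD : ∀ a : {a : A // L a ≤ 1}, (‖g a.1‖₊ : ℝ≥0∞) ≤ D :=
      fun a => le_iSup (fun b : {a : A // L a ≤ 1} => (‖g b.1‖₊ : ℝ≥0∞)) a
    have hgsD : ∀ a : {a : A // L a ≤ 1}, (‖g (star a.1)‖₊ : ℝ≥0∞) ≤ D := by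
      intro a
      have : L (star a.1) ≤ 1 := by rw [hstar]; exact a.2
      exact le_iSup (fun b : {a : A // L a ≤ 1} => (‖g b.1‖₊ : ℝ≥0∞)) ⟨star a.1, this⟩
    have hr1 : rho L φ₁ φ₂ ≤ D := by
      refine iSup_le fun a => ?_
      have h2 : (2 : ℝ≥0∞) * ‖φ₁ a.1 - φ₂ a.1‖₊ ≤ 2 * D := by
        calc (2 : ℝ≥0∞) * ‖φ₁ a.1 - φ₂ a.1‖₊
            = (‖(2 : ℂ) * (φ₁ a.1 - φ₂ a.1)‖₊ : ℝ≥0∞) := by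
              rw [nnnorm_mul]; norm_num
          _ = (‖g a.1 + starRingEnd ℂ (g (star a.1))‖₊ : ℝ≥0∞) := by rw [(key a).1]
          _ ≤ (‖g a.1‖₊ : ℝ≥0∞) + ‖starRingEnd ℂ (g (star a.1))‖₊ := by
              exact_mod_cast nnnorm_add_le _ _
          _ = (‖g a.1‖₊ : ℝ≥0∞) + ‖g (star a.1)‖₊ := by rw [RCLike.nnnorm_conj]
          _ ≤ D + D := add_le_add (hgD a) (hgsD a)
          _ = 2 * D := (two_mul D).symm
      exact (ENNReal.mul_le_mul_iff_right (by norm_num) (by norm_num)).1 h2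
    have hr2 : rho L φ₃ φ₄ ≤ D := by
      refine iSup_le fun a => ?_
      have h2 : (2 : ℝ≥0∞) * ‖φ₃ a.1 - φ₄ a.1‖₊ ≤ 2 * D := by
        calc (2 : ℝ≥0∞) * ‖φ₃ a.1 - φ₄ a.1‖₊
            = (‖(2 : ℂ) * Complex.I * (φ₃ a.1 - φ₄ a.1)‖₊ : ℝ≥0∞) := by
              rw [nnnorm_mul, nnnorm_mul, Complex.nnnorm_I]; norm_num
          _ = (‖g a.1 - starRingEnd ℂ (g (star a.1))‖₊ : ℝ≥0∞) := by rw [(key a).2]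
          _ ≤ (‖g a.1‖₊ : ℝ≥0∞) + ‖starRingEnd ℂ (g (star a.1))‖₊ := by
              exact_mod_cast nnnorm_sub_le _ _
          _ = (‖g a.1‖₊ : ℝ≥0∞) + ‖g (star a.1)‖₊ := by rw [RCLike.nnnorm_conj]
          _ ≤ D + D := add_le_add (hgD a) (hgsD a)
          _ = 2 * D := (two_mul D).symm
      exact (ENNReal.mul_le_mul_iff_right (by norm_num) (by norm_num)).1 h2
    calc rho L φ₁ φ₂ + rho L φ₃ φ₄ ≤ D + D := add_le_add hr1 hr2
      _ = 2 * D := (two_mul D).symm
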